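/- Let μ be a finite positive Borel measure on ℝ with μ({t ∈ ℝ : |t| ≥ 1}) = 0, and set q_k := ∫ t^k dμ(t) for k ∈ ℕ. Then the following are equivalent: (a) there exists C > 0 such that μ({t : |t| > 1 − ε}) ≤ Cε for all ε ∈ (0,1); (b) there exists C > 0 such that |q_k| ≤ C/k for all k ≥ 1. -/

import Mathlib

open MeasureTheory Set

lemma ae_lt (μ : Measure ℝ) (hμ : μ {t : ℝ | 1 ≤ |t|} = 0) : ∀ᵐ t ∂μ, |t| < 1 := by
  rw [ae_iff]; convert hμ using 2; ext t; simp [not_lt]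

lemma intg (μ : Measure ℝ) [IsFiniteMeasure μ] (hμ : μ {t : ℝ | 1 ≤ |t|} = 0) (k : ℕ) :
    Integrable (fun t : ℝ => t ^ k) μ := by
  apply Integrable.mono' (integrable_const (1:ℝ)) ((continuous_pow k).aestronglyMeasurable)
  filter_upwards [ae_lt μ hμ] with t ht
  rw [Real.norm_eq_abs, abs_pow]
  exact pow_le_one₀ (abs_nonneg t) ht.le

lemma dir_ab (μ : Measure ℝ) [IsFiniteMeasure μ]
    (hμ : μ {t : ℝ | 1 ≤ |t|} = 0) (C : ℝ) (hC : 0 < C)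
    (h : ∀ ε ∈ Set.Ioo (0 : ℝ) 1, μ {t : ℝ | 1 - ε < |t|} ≤ ENNReal.ofReal (C * ε))
    (k : ℕ) (hk : 1 ≤ k) : |∫ t, t ^ k ∂μ| ≤ C / k := by
  obtain ⟨m, rfl⟩ : ∃ m, k = m + 1 := ⟨k - 1, (Nat.succ_pred_eq_of_pos hk).symm⟩
  set k := m + 1 with hk'
  -- step 1: reduce to ∫ |t|^k
  have step1 : |∫ t, t ^ k ∂μ| ≤ ∫ t, |t| ^ k ∂μ := by
    calc |∫ t, t ^ k ∂μ| = ‖∫ t, t ^ k ∂μ‖ := (Real.norm_eq_abs _).symm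
    _ ≤ ∫ t, ‖t ^ k‖ ∂μ := norm_integral_le_integral_norm _
    _ = ∫ t, |t| ^ k ∂μ := by simp [Real.norm_eq_abs, abs_pow]
  -- layer cake
  have g_cont : Continuous (fun s : ℝ => ((m:ℝ)+1) * s ^ m) := by continuity
  have key := lintegral_comp_eq_lintegral_meas_lt_mul μ
    (f := fun t : ℝ => |t|) (g := fun s : ℝ => ((m:ℝ)+1) * s ^ m)
    (Filter.Eventually.of_forall fun t => abs_nonneg t)
    continuous_abs.aemeasurable
    (fun t _ => g_cont.intervalIntegrable 0 t)
    ((ae_restrict_iff' measurableSet_Ioi).mpr (Filter.Eventually.of_forall fun s hs => by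
      have : (0:ℝ) < s := hs; positivity))
  have eval : ∀ x : ℝ, (∫ s in (0:ℝ)..x, ((m:ℝ)+1) * s ^ m) = x ^ k := by
    intro x
    rw [intervalIntegral.integral_const_mul, integral_pow]
    have : ((m:ℝ)+1) ≠ 0 := by positivity
    field_simp
    rw [zero_pow (Nat.succ_ne_zero m), sub_zero]
  simp only [eval] at key
  -- bound RHS
  have rhs_le : ∫⁻ s in Ioi (0:ℝ), μ {a : ℝ | s < |a|} * ENNReal.ofReal (((m:ℝ)+1) * s ^ m)
      ≤ ∫⁻ s in Ioi (0:ℝ), ENNReal.ofReal ((C * (1 - s)) * (((m:ℝ)+1) * s ^ m)) := by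
    apply setLIntegral_mono
    · exact (ENNReal.measurable_ofReal.comp (by fun_prop))
    · intro s hs
      rcases lt_or_ge s 1 with hs1 | hs1
      · have hε : (1 : ℝ) - (1 - s) = s := by ring
        have hb := h (1 - s) ⟨by linarith, by linarith [mem_Ioi.mp hs]⟩
        rw [hε] at hb
        calc μ {a : ℝ | s < |a|} * ENNReal.ofReal (((m:ℝ)+1) * s ^ m)
            ≤ ENNReal.ofReal (C * (1 - s)) * ENNReal.ofReal (((m:ℝ)+1) * s ^ m) :=
              mul_le_mul_left hb _
          _ = ENNReal.ofReal ((C * (1 - s)) * (((m:ℝ)+1) * s ^ m)) :=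
              (ENNReal.ofReal_mul (by nlinarith [mem_Ioi.mp hs])).symm
      · have : μ {a : ℝ | s < |a|} = 0 := by
          apply measure_mono_null _ hμ
          intro a ha; exact le_trans hs1 (le_of_lt ha)
        simp [this]
  -- compute the bound integral
  have split : ∫⁻ s in Ioi (0:ℝ), ENNReal.ofReal ((C * (1 - s)) * (((m:ℝ)+1) * s ^ m))
      = ∫⁻ s in Ioc (0:ℝ) 1, ENNReal.ofReal ((C * (1 - s)) * (((m:ℝ)+1) * s ^ m)) := by
    rw [← Ioc_union_Ioi_eq_Ioi (zero_le_one (α := ℝ)),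
      lintegral_union measurableSet_Ioi Ioc_disjoint_Ioi_same]
    have : ∫⁻ s in Ioi (1:ℝ), ENNReal.ofReal ((C * (1 - s)) * (((m:ℝ)+1) * s ^ m)) = 0 := by
      rw [setLIntegral_congr_fun measurableSet_Ioi
        (fun s (hs : s ∈ Ioi (1:ℝ)) => ?_), lintegral_zero]
      have hs1 : (1:ℝ) < s := hs
      have : (C * (1 - s)) * (((m:ℝ)+1) * s ^ m) ≤ 0 := by
        apply mul_nonpos_of_nonpos_of_nonneg
        · nlinarith
        · positivity
      simp [ENNReal.ofReal_eq_zero.mpr this]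
    rw [this, add_zero]
  have comp : ∫⁻ s in Ioc (0:ℝ) 1, ENNReal.ofReal ((C * (1 - s)) * (((m:ℝ)+1) * s ^ m))
      = ENNReal.ofReal (∫ s in Ioc (0:ℝ) 1, (C * (1 - s)) * (((m:ℝ)+1) * s ^ m)) := by
    rw [ofReal_integral_eq_lintegral_ofReal]
    · exact (Continuous.integrableOn_Ioc (by continuity))
    · filter_upwards [ae_restrict_mem measurableSet_Ioc] with s hs
      have h1 : 0 < s := hs.1
      have h2 : s ≤ 1 := hs.2
      have : 0 ≤ 1 - s := by linarith
      positivity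
  have val : (∫ s in Ioc (0:ℝ) 1, (C * (1 - s)) * (((m:ℝ)+1) * s ^ m)) = C / (m + 2) := by
    rw [← intervalIntegral.integral_of_le zero_le_one]
    have : (fun s : ℝ => (C * (1 - s)) * (((m:ℝ)+1) * s ^ m))
        = fun s : ℝ => (C * ((m:ℝ)+1)) * s ^ m - (C * ((m:ℝ)+1)) * s ^ (m+1) := by
      funext s; ring
    rw [this, intervalIntegral.integral_sub, intervalIntegral.integral_const_mul,
      intervalIntegral.integral_const_mul, integral_pow, integral_pow]
    · have h1 : ((m:ℝ))+1 ≠ 0 := by positivity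
      have h2 : ((m:ℝ))+2 ≠ 0 := by positivity
      push_cast
      field_simp
      ring
    · exact ((continuous_const.mul (continuous_pow m)).intervalIntegrable 0 1)
    · exact ((continuous_const.mul (continuous_pow (m+1))).intervalIntegrable 0 1)
  -- assemble
  have lin_le : ∫⁻ t, ENNReal.ofReal (|t| ^ k) ∂μ ≤ ENNReal.ofReal (C / (m + 2)) := by
    rw [key]; rw [split, comp, val] at rhs_le; exact rhs_le
  have int_eq : ∫ t, |t| ^ k ∂μ = (∫⁻ t, ENNReal.ofReal (|t| ^ k) ∂μ).toReal := by
    rw [integral_eq_lintegral_of_nonneg_ae (f := fun t => |t| ^ k) (Filter.Eventually.of_forall fun t => by positivity)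
      ((continuous_abs.pow k).aestronglyMeasurable)]
  have : ∫ t, |t| ^ k ∂μ ≤ C / (m + 2) := by
    rw [int_eq]
    calc (∫⁻ t, ENNReal.ofReal (|t| ^ k) ∂μ).toReal
        ≤ (ENNReal.ofReal (C / (m + 2))).toReal :=
          ENNReal.toReal_mono ENNReal.ofReal_ne_top lin_le
      _ = C / (m + 2) := ENNReal.toReal_ofReal (by positivity)
    
  calc |∫ t, t ^ k ∂μ| ≤ ∫ t, |t| ^ k ∂μ := step1
    _ ≤ C / (m + 2) := this
    _ ≤ C / k := by
        rw [hk']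
        apply div_le_div_of_nonneg_left hC.le (by positivity)
        push_cast; linarith

lemma dir_ba (μ : Measure ℝ) [IsFiniteMeasure μ]
    (hμ : μ {t : ℝ | 1 ≤ |t|} = 0) (C : ℝ) (hC : 0 < C)
    (h : ∀ k : ℕ, 1 ≤ k → |∫ t, t ^ k ∂μ| ≤ C / k) :
    ∃ C' > 0, ∀ ε ∈ Set.Ioo (0 : ℝ) 1, μ {t : ℝ | 1 - ε < |t|} ≤ ENNReal.ofReal (C' * ε) := by
  set M : ℝ := (μ Set.univ).toReal with hM
  have hM0 : 0 ≤ M := ENNReal.toReal_nonneg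
  refine ⟨C * Real.exp 8 + 2 * M + 1, by positivity, ?_⟩
  intro ε hε
  obtain ⟨hε0, hε1⟩ := hε
  set C' : ℝ := C * Real.exp 8 + 2 * M + 1 with hC'
  rcases le_or_gt (1/2 : ℝ) ε with hhalf | hhalf
  · -- easy case
    calc μ {t : ℝ | 1 - ε < |t|} ≤ μ Set.univ := measure_mono (subset_univ _)
      _ = ENNReal.ofReal M := (ENNReal.ofReal_toReal (measure_ne_top μ _)).symm
      _ ≤ ENNReal.ofReal (C' * ε) := by
          apply ENNReal.ofReal_le_ofReal
          nlinarith [mul_pos hC (Real.exp_pos (8:ℝ)),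
            mul_nonneg hM0 (by linarith : (0:ℝ) ≤ ε - 1/2),
            mul_pos (mul_pos hC (Real.exp_pos (8:ℝ))) hε0]
  · -- main case
    set k : ℕ := ⌈1/ε⌉₊ with hk
    have hk1 : 1 ≤ k := Nat.one_le_ceil_iff.mpr (by positivity)
    have hkge : 1/ε ≤ (k:ℝ) := Nat.le_ceil _
    have hklt : (k:ℝ) < 1/ε + 1 := Nat.ceil_lt_add_one (by positivity)
    have h0 : (1/ε) * ε = 1 := by field_simp
    have hkε1 : 1 ≤ (k:ℝ) * ε := by
      nlinarith [mul_le_mul_of_nonneg_right hkge hε0.le]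
    have hkε2 : (k:ℝ) * ε < 2 := by
      nlinarith [mul_lt_mul_of_pos_right hklt hε0]
    set S : Set ℝ := {t : ℝ | 1 - ε < |t|} with hS
    have h1ε : 0 < 1 - ε := by linarith
    -- lower bound on moment
    have lower : ENNReal.ofReal ((1-ε)^(2*k)) * μ S ≤ ∫⁻ t, ENNReal.ofReal (t ^ (2*k)) ∂μ := by
      calc ENNReal.ofReal ((1-ε)^(2*k)) * μ S
          = ∫⁻ _ in S, ENNReal.ofReal ((1-ε)^(2*k)) ∂μ := (setLIntegral_const S _).symm
        _ ≤ ∫⁻ t in S, ENNReal.ofReal (t ^ (2*k)) ∂μ := by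
            apply setLIntegral_mono (by fun_prop)
            intro t ht
            apply ENNReal.ofReal_le_ofReal
            have habs : 1 - ε < |t| := ht
            calc (1-ε)^(2*k) ≤ |t| ^ (2*k) := pow_le_pow_left₀ h1ε.le habs.le _
              _ = |t ^ (2*k)| := (abs_pow t (2*k)).symm
              _ = t ^ (2*k) := abs_of_nonneg (even_two_mul k |>.pow_nonneg t)
        _ ≤ ∫⁻ t, ENNReal.ofReal (t ^ (2*k)) ∂μ := setLIntegral_le_lintegral S _
    have moment_eq : ∫⁻ t, ENNReal.ofReal (t ^ (2*k)) ∂μ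
        = ENNReal.ofReal (∫ t, t ^ (2*k) ∂μ) := by
      rw [← ofReal_integral_eq_lintegral_ofReal (intg μ hμ (2*k))
        (Filter.Eventually.of_forall fun t => (even_two_mul k).pow_nonneg t)]
    have hq : ∫ t, t ^ (2*k) ∂μ ≤ C / (2*k) := by
      have h2k := h (2*k) (by omega)
      push_cast at h2k
      calc ∫ t, t ^ (2*k) ∂μ ≤ |∫ t, t ^ (2*k) ∂μ| := le_abs_self _
        _ ≤ C / (2*k) := h2k
    -- exp bound : (1-ε)^(2k) ≥ exp(-8)
    have hexp1 : Real.exp (-(2*ε)) ≤ 1 - ε := by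
      have h1 : 1 + 2*ε ≤ Real.exp (2*ε) := by
        have := Real.add_one_le_exp (2*ε); linarith
      have hE : 0 < Real.exp (2*ε) := Real.exp_pos _
      rw [Real.exp_neg, inv_le_iff_one_le_mul₀ hE]
      nlinarith
    have hexp2 : Real.exp (-(8:ℝ)) ≤ (1-ε)^(2*k) := by
      calc Real.exp (-(8:ℝ)) ≤ Real.exp ((2*k : ℕ) * (-(2*ε))) := by
            apply Real.exp_le_exp.mpr
            push_cast
            nlinarith
        _ = (Real.exp (-(2*ε)))^(2*k) := by rw [← Real.exp_nat_mul]
        _ ≤ (1-ε)^(2*k) := pow_le_pow_left₀ (Real.exp_pos _).le hexp1 _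
    -- conclude
    have hpow_pos : (0:ℝ) < (1-ε)^(2*k) := by positivity
    have final_real : C / (2*(k:ℝ)) ≤ (C' * ε) * (1-ε)^(2*k) := by
      have hE8 : (0:ℝ) < Real.exp 8 := Real.exp_pos _
      have hee : (0:ℝ) < Real.exp (-(8:ℝ)) := Real.exp_pos _
      have hCk : C / (2*(k:ℝ)) ≤ C * ε / 2 := by
        rw [div_le_div_iff₀ (by positivity) (by norm_num)]
        nlinarith
      have h2 : C * Real.exp 8 * ε * Real.exp (-(8:ℝ)) = C * ε := by
        rw [Real.exp_neg]; field_simp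
      have h3 : C * Real.exp 8 * ε * Real.exp (-(8:ℝ)) ≤ C' * ε * (1-ε)^(2*k) := by
        have hC'ge : C * Real.exp 8 ≤ C' := by nlinarith
        nlinarith [mul_le_mul_of_nonneg_left hexp2 (by positivity : (0:ℝ) ≤ C * Real.exp 8 * ε),
          mul_le_mul_of_nonneg_right hC'ge (by positivity : (0:ℝ) ≤ ε * (1-ε)^(2*k))]
      calc C / (2*(k:ℝ)) ≤ C * ε / 2 := hCk
        _ ≤ C * ε := by nlinarith [mul_pos hC hε0]
        _ = C * Real.exp 8 * ε * Real.exp (-(8:ℝ)) := h2.symm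
        _ ≤ (C' * ε) * (1-ε)^(2*k) := h3
    have hne0 : ENNReal.ofReal ((1-ε)^(2*k)) ≠ 0 := by
      simp [ENNReal.ofReal_eq_zero, not_le, hpow_pos]
    have hnetop : ENNReal.ofReal ((1-ε)^(2*k)) ≠ ⊤ := ENNReal.ofReal_ne_top
    have lower2 : μ S ≤ ENNReal.ofReal (∫ t, t ^ (2*k) ∂μ) / ENNReal.ofReal ((1-ε)^(2*k)) := by
      rw [ENNReal.le_div_iff_mul_le (Or.inl hne0) (Or.inl hnetop), mul_comm]
      rw [← moment_eq]
      exact lower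
    refine lower2.trans ?_
    rw [ENNReal.div_le_iff hne0 hnetop, ← ENNReal.ofReal_mul (by positivity)]
    apply ENNReal.ofReal_le_ofReal
    calc ∫ t, t ^ (2*k) ∂μ ≤ C / (2*(k:ℝ)) := hq
      _ ≤ (C' * ε) * (1-ε)^(2*k) := final_real

theorem stmt_5 (μ : Measure ℝ) [IsFiniteMeasure μ]
    (hμ : μ {t : ℝ | 1 ≤ |t|} = 0)
    (q : ℕ → ℝ) (hq : ∀ k : ℕ, q k = ∫ t, t ^ k ∂μ) :
    (∃ C > 0, ∀ ε ∈ Set.Ioo (0 : ℝ) 1, μ {t : ℝ | 1 - ε < |t|} ≤ ENNReal.ofReal (C * ε)) ↔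
      (∃ C > 0, ∀ k : ℕ, 1 ≤ k → |q k| ≤ C / k) := by
  constructor
  · rintro ⟨C, hC, h⟩
    exact ⟨C, hC, fun k hk => by rw [hq]; exact dir_ab μ hμ C hC h k hk⟩
  · rintro ⟨C, hC, h⟩
    exact dir_ba μ hμ C hC (fun k hk => by rw [← hq]; exact h k hk)
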